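/- Let W be a convex subset of a real normed vector space, let (Ω, F, P) be a probability space, let X and Y be random variables on Ω taking values in W, and let A be a Borel subset of W. Then |P[X ∈ A] − P[Y ∈ A]| ≤ P[ dist(X, ∂A) + dist(Y, ∂A) ≤ ‖X − Y‖ ]. -/

import Mathlib

open MeasureTheory

lemma cross_aux {V : Type*} [NormedAddCommGroup V] [NormedSpace ℝ V]
    {W : Set V} (hW : Convex ℝ W) {A : Set V} (hAW : A ⊆ W)
    {x y : V} (hx : x ∈ W) (hy : y ∈ W) (hxA : x ∈ A) (hyA : y ∉ A) :
    Metric.infDist x (W ∩ closure A ∩ closure (W \ A)) +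
      Metric.infDist y (W ∩ closure A ∩ closure (W \ A)) ≤ ‖x - y‖ := by
  have hseg : segment ℝ x y ⊆ W := hW.segment_subset hx hy
  have hpre : IsPreconnected (segment ℝ x y) := (convex_segment x y).isPreconnected
  have hcover : segment ℝ x y ⊆ closure A ∪ closure (W \ A) := by
    intro z hz
    by_cases hzA : z ∈ A
    · exact Or.inl (subset_closure hzA)
    · exact Or.inr (subset_closure ⟨hseg hz, hzA⟩)
  obtain ⟨z, hzS, hzA, hzB⟩ :=
    (isPreconnected_closed_iff.mp hpre) (closure A) (closure (W \ A))
      isClosed_closure isClosed_closure hcover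
      ⟨x, left_mem_segment ℝ x y, subset_closure hxA⟩
      ⟨y, right_mem_segment ℝ x y, subset_closure ⟨hy, hyA⟩⟩
  have hzmem : z ∈ W ∩ closure A ∩ closure (W \ A) := ⟨⟨hseg hzS, hzA⟩, hzB⟩
  have h1 : Metric.infDist x (W ∩ closure A ∩ closure (W \ A)) ≤ dist x z :=
    Metric.infDist_le_dist_of_mem hzmem
  have h2 : Metric.infDist y (W ∩ closure A ∩ closure (W \ A)) ≤ dist y z :=
    Metric.infDist_le_dist_of_mem hzmem
  have h3 : dist x z + dist z y = dist x y := dist_add_dist_of_mem_segment hzS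
  rw [← dist_eq_norm]
  calc _ ≤ dist x z + dist y z := add_le_add h1 h2
    _ = dist x z + dist z y := by rw [dist_comm y z]
    _ = dist x y := h3

/- The relative boundary of `A` in the subspace topology of `W` is
`W ∩ closure A ∩ closure (W \ A)`; `dist(w, ∂A)` is `Metric.infDist`. -/
theorem stmt_18 {V : Type*} [NormedAddCommGroup V] [NormedSpace ℝ V]
    [MeasurableSpace V] [BorelSpace V]
    {W : Set V} (hW : Convex ℝ W)
    {Ω : Type*} [MeasurableSpace Ω] (P : Measure Ω) [IsProbabilityMeasure P]
    (X Y : Ω → V) (hX : Measurable X) (hY : Measurable Y)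
    (hXW : ∀ ω, X ω ∈ W) (hYW : ∀ ω, Y ω ∈ W)
    (A : Set V) (hAW : A ⊆ W) (hA : MeasurableSet A) :
    |(P {ω | X ω ∈ A}).toReal - (P {ω | Y ω ∈ A}).toReal| ≤
      (P {ω | Metric.infDist (X ω) (W ∩ closure A ∩ closure (W \ A)) +
              Metric.infDist (Y ω) (W ∩ closure A ∩ closure (W \ A)) ≤
              ‖X ω - Y ω‖}).toReal := by
  set E := {ω | Metric.infDist (X ω) (W ∩ closure A ∩ closure (W \ A)) +
              Metric.infDist (Y ω) (W ∩ closure A ∩ closure (W \ A)) ≤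
              ‖X ω - Y ω‖}
  set B := {ω | X ω ∈ A}
  set C := {ω | Y ω ∈ A}
  have hBC : B \ C ⊆ E := by
    intro ω ⟨h1, h2⟩
    exact cross_aux hW hAW (hXW ω) (hYW ω) h1 h2
  have hCB : C \ B ⊆ E := by
    intro ω ⟨h1, h2⟩
    have := cross_aux hW hAW (hYW ω) (hXW ω) h1 h2
    simp only [E, Set.mem_setOf_eq]
    rw [norm_sub_rev]
    linarith
  have key : ∀ S T : Set Ω, S \ T ⊆ E → (P S).toReal ≤ (P T).toReal + (P E).toReal := by
    intro S T hST
    have h1 : P S ≤ P T + P E := by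
      calc P S ≤ P (T ∪ (S \ T)) := measure_mono (by intro ω hω; by_cases h : ω ∈ T <;> simp [h, hω])
        _ ≤ P T + P (S \ T) := measure_union_le _ _
        _ ≤ P T + P E := add_le_add_right (measure_mono hST) _
    have := ENNReal.toReal_mono (by finiteness) h1
    rwa [ENNReal.toReal_add (by finiteness) (by finiteness)] at this
  rw [abs_sub_le_iff]
  constructor <;> [have := key B C hBC; have := key C B hCB] <;> linarith
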